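/- (De Concini–Procesi) If ζ ∈ ℂ is a root of unity, then the quantum torus T_ζ(E) is an Azumaya algebra over its center. -/

import Mathlib

open TensorProduct

/-- The natural `R`-algebra map `A ⊗[R] Aᵐᵒᵖ → End_R(A)` (here given as the underlying
`R`-linear map), sending `a ⊗ bᵒᵖ` to the endomorphism `x ↦ a * x * b`.  An `R`-algebra
`A` is Azumaya when `A` is a faithfully projective `R`-module and this map is an
isomorphism. -/
noncomputable def azumayaMap (R A : Type*) [CommRing R] [Ring A] [Algebra R A] :
    A ⊗[R] Aᵐᵒᵖ →ₗ[R] Module.End R A :=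
  TensorProduct.lift <| LinearMap.mk₂ R
    (fun a b => (LinearMap.mulRight R b.unop).comp (LinearMap.mulLeft R a))
    (by intro a a' b; ext x; simp [add_mul])
    (by intro c a b; ext x; simp [smul_mul_assoc])
    (by intro a b b'; ext x; simp [mul_add])
    (by intro c a b; ext x; simp [mul_smul_comm])

lemma azumayaMap_tmul (R A : Type*) [CommRing R] [Ring A] [Algebra R A] (a b x : A) :
    azumayaMap R A (a ⊗ₜ[R] MulOpposite.op b) x = a * x * b := by
  simp [azumayaMap]

set_option maxHeartbeats 1000000 in
/-- De Concini–Procesi: let `E` be a free `ℤ`-module of finite rank with a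
skew-symmetric bilinear form `ω`, and let `T_ζ(E)` be the quantum torus: a `ℂ`-algebra
`A` with basis `(Z_e)_{e ∈ E}`, `Z_0 = 1` and `Z_a · Z_b = ζ^{ω(a,b)} Z_{a+b}`.  If `ζ`
is a root of unity, then `T_ζ(E)` is Azumaya over its center `R`: it is a faithfully
projective `R`-module (faithful, finitely generated and projective) and the natural map
`A ⊗[R] Aᵐᵒᵖ → End_R(A)` is bijective. -/
theorem stmt8 {E : Type*} [AddCommGroup E] [Module.Free ℤ E] [Module.Finite ℤ E]
    (ω : E →ₗ[ℤ] E →ₗ[ℤ] ℤ) (hskew : ∀ a b : E, ω a b = - ω b a)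
    {A : Type*} [Ring A] [Algebra ℂ A]
    (ζ : ℂ) (hζ : ζ ≠ 0) (Z : Module.Basis E ℂ A) (hone : Z 0 = 1)
    (hmul : ∀ a b : E, Z a * Z b = ζ ^ (ω a b) • Z (a + b))
    (hroot : ∃ n : ℕ, 1 ≤ n ∧ ζ ^ n = 1) :
    FaithfulSMul (Subring.center A) A ∧
    Module.Finite (Subring.center A) A ∧
    Module.Projective (Subring.center A) A ∧
    Function.Bijective (azumayaMap (Subring.center A) A) := by
  classical
  obtain ⟨n, hn1, hζn⟩ := hroot
  set R := Subring.center A with hR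
  -- basic scalar facts
  have hzadd : ∀ m k : ℤ, ζ ^ (m + k) = ζ ^ m * ζ ^ k := fun m k => zpow_add₀ hζ m k
  have homega : ∀ a : E, ω a a = 0 := fun a => by have := hskew a a; omega
  have hω1 : ∀ a b x : E, ω (a + b) x = ω a x + ω b x := fun a b x => by
    rw [map_add]; rfl
  have hων1 : ∀ a x : E, ω (-a) x = -(ω a x) := fun a x => by
    rw [map_neg]; rfl
  have hhalf : ∀ k : ℤ, ζ ^ (2 * k) = 1 → ζ ^ (-k) = ζ ^ k := by
    intro k hk
    have h1 : ζ ^ k * ζ ^ k = 1 := by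
      rw [← hzadd]; rw [two_mul] at hk; exact hk
    rw [zpow_neg]
    exact inv_eq_of_mul_eq_one_left h1
  -- Z a is invertible
  have hZinv : ∀ a : E, Z a * Z (-a) = 1 := by
    intro a
    rw [hmul]
    have h1 : ω a (-a) = 0 := by rw [map_neg, homega]; ring
    rw [h1, add_neg_cancel, hone, zpow_zero, one_smul]
  have hZinv' : ∀ a : E, Z (-a) * Z a = 1 := fun a => by
    have := hZinv (-a); rwa [neg_neg] at this
  -- conjugation formula
  have hconj : ∀ u e : E, Z u * Z e * Z (-u) = ζ ^ (2 * ω u e) • Z e := by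
    intro u e
    rw [hmul u e, smul_mul_assoc, hmul (u + e) (-u), smul_smul, ← hzadd]
    have h2 : ω (u + e) (-u) = -(ω u u) - ω e u := by
      rw [hω1, map_neg, map_neg]; ring
    have h1 : ω u e + ω (u + e) (-u) = 2 * ω u e := by
      rw [h2, homega u, hskew e u]; ring
    rw [h1, show u + e + -u = e from by abel]
  -- the subgroup H
  set H : AddSubgroup E :=
    { carrier := {e | ∀ f : E, ζ ^ (2 * ω e f) = 1}
      zero_mem' := by intro f; simp
      add_mem' := by
        intro a b ha hb f
        have h1 : 2 * ω (a + b) f = 2 * ω a f + 2 * ω b f := by rw [hω1]; ring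
        rw [h1, hzadd, ha f, hb f, one_mul]
      neg_mem' := by
        intro a ha f
        have h1 : 2 * ω (-a) f = -(2 * ω a f) := by rw [hων1]; ring
        rw [h1, zpow_neg, ha f, inv_one] } with hHdef
  have hmemH : ∀ x : E, x ∈ H ↔ ∀ f : E, ζ ^ (2 * ω x f) = 1 := fun x => Iff.rfl
  -- membership in the second slot
  have hH2 : ∀ x : E, x ∈ H → ∀ g : E, ζ ^ (2 * ω g x) = 1 := by
    intro x hx g
    have h1 : 2 * ω g x = -(2 * ω x g) := by have := hskew g x; omega
    rw [h1, zpow_neg, hx g, inv_one]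
  -- finiteness of the quotient
  haveI : Finite (E ⧸ H) := by
    haveI : AddGroup.FG E := Module.Finite.iff_addGroup_fg.mp ‹_›
    apply AddCommGroup.finite_of_fg_torsion
    intro g
    rw [isOfFinAddOrder_iff_nsmul_eq_zero]
    refine ⟨n, by omega, ?_⟩
    obtain ⟨e, rfl⟩ := QuotientAddGroup.mk_surjective g
    have : ((n • e : E) : E ⧸ H) = 0 := by
      rw [QuotientAddGroup.eq_zero_iff]
      intro f
      have h1 : 2 * ω (n • e) f = n * (2 * ω e f) := by
        rw [map_nsmul]; simp [smul_eq_mul]; ring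
      rw [h1, zpow_mul, zpow_natCast, hζn, one_zpow]
    rw [← this]
    rfl
  haveI : Fintype (E ⧸ H) := Fintype.ofFinite _
  set Q := E ⧸ H with hQ
  set out : Q → E := fun g => Quotient.out g with hout
  have hout_eq : ∀ g : Q, (QuotientAddGroup.mk (out g) : Q) = g := fun g =>
    QuotientAddGroup.out_eq' g
  have hcard : (Fintype.card Q : ℂ) ≠ 0 := by
    exact_mod_cast Nat.cast_ne_zero.mpr (Fintype.card_ne_zero)
  -- character sum
  have hsum : ∀ x : E, (∑ f : Q, ζ ^ (2 * ω (out f) x)) =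
      if x ∈ H then (Fintype.card Q : ℂ) else 0 := by
    intro x
    by_cases hx : x ∈ H
    · rw [if_pos hx]
      rw [Finset.sum_congr rfl (fun f _ => hH2 x hx (out f))]
      simp
    · rw [if_neg hx]
      have hex : ∃ g : E, ζ ^ (2 * ω g x) ≠ 1 := by
        by_contra h
        push_neg at h
        exact hx (fun f => by
          have h1 : 2 * ω x f = -(2 * ω f x) := by have := hskew x f; omega
          rw [h1, zpow_neg, h f, inv_one])
      obtain ⟨g, hg⟩ := hex
      set S := ∑ f : Q, ζ ^ (2 * ω (out f) x) with hS
      have key : ζ ^ (2 * ω g x) * S = S := by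
        rw [hS, Finset.mul_sum]
        have h1 : ∀ f : Q, ζ ^ (2 * ω g x) * ζ ^ (2 * ω (out f) x)
            = ζ ^ (2 * ω (out (f + QuotientAddGroup.mk g)) x) := by
          intro f
          have hd : out (f + QuotientAddGroup.mk g) - (out f + g) ∈ H := by
            rw [← QuotientAddGroup.eq_iff_sub_mem]
            rw [QuotientAddGroup.mk_add, hout_eq, hout_eq]
          have hdec : out (f + QuotientAddGroup.mk g)
              = (out (f + QuotientAddGroup.mk g) - (out f + g)) + (out f + g) := by abel
          rw [hdec, hω1, hω1]
          rw [show 2 * (ω (out (f + QuotientAddGroup.mk g) - (out f + g)) x + (ω (out f) x + ω g x))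
              = 2 * ω (out (f + QuotientAddGroup.mk g) - (out f + g)) x + (2 * ω (out f) x + 2 * ω g x) from by ring]
          rw [hzadd, hd _, one_mul, hzadd]
          ring
        rw [Finset.sum_congr rfl (fun f _ => h1 f)]
        exact Fintype.sum_equiv (Equiv.addRight (QuotientAddGroup.mk g : Q))
          _ _ (fun f => by simp [Equiv.addRight])
      have h2 : (ζ ^ (2 * ω g x) - 1) * S = 0 := by
        rw [sub_mul, key, one_mul, sub_self]
      rcases mul_eq_zero.mp h2 with h | h
      · exact absurd (eq_of_sub_eq_zero h) hg
      · exact h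
    -- membership of Z e in the center, for e ∈ H
  have hcent : ∀ e : E, e ∈ H → Z e ∈ Subring.center A := by
    intro e he
    rw [Subring.mem_center_iff]
    intro g
    have hZc : LinearMap.mulRight ℂ (Z e) = LinearMap.mulLeft ℂ (Z e) := by
      refine Module.Basis.ext Z (fun f => ?_)
      rw [LinearMap.mulRight_apply, LinearMap.mulLeft_apply, hmul, hmul, add_comm f e]
      congr 1
      have h1 : ω f e = -(ω e f) := hskew f e
      rw [h1, hhalf _ (he f)]
    exact LinearMap.congr_fun hZc g
  have hcsmul : ∀ (c : ℂ) (z : A), z ∈ Subring.center A → c • z ∈ Subring.center A := by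
    intro c z hz
    rw [Subring.mem_center_iff] at hz ⊢
    intro g
    rw [mul_smul_comm, hz g, smul_mul_assoc]
  -- coercion of center smul
  have hsmul_def : ∀ (r : R) (x : A), r • x = (r : A) * x := fun r x => rfl
  -- the projections
  set P : Q → (A →ₗ[ℂ] A) := fun s => ∑ f : Q, (ζ ^ (-(2 * ω (out f) (out s)))) •
      ((LinearMap.mulRight ℂ (Z (-out f))).comp (LinearMap.mulLeft ℂ (Z (out f)))) with hPdef
  have hPapply : ∀ (s : Q) (x : A), P s x
      = ∑ f : Q, ζ ^ (-(2 * ω (out f) (out s))) • (Z (out f) * x * Z (-out f)) := by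
    intro s x
    rw [hPdef]
    rw [LinearMap.sum_apply]
    refine Finset.sum_congr rfl (fun f _ => ?_)
    rw [LinearMap.smul_apply, LinearMap.comp_apply, LinearMap.mulLeft_apply,
      LinearMap.mulRight_apply]
  have hPZ : ∀ (s : Q) (e : E), P s (Z e)
      = (if (QuotientAddGroup.mk e : Q) = s then (Fintype.card Q : ℂ) else 0) • Z e := by
    intro s e
    rw [hPapply]
    have h1 : ∀ f : Q, ζ ^ (-(2 * ω (out f) (out s))) • (Z (out f) * Z e * Z (-out f))
        = ζ ^ (2 * ω (out f) (e - out s)) • Z e := by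
      intro f
      rw [hconj, smul_smul, ← hzadd]
      congr 1
      rw [map_sub]
      ring
    rw [Finset.sum_congr rfl (fun f _ => h1 f), ← Finset.sum_smul, hsum]
    congr 1
    have h2 : (e - out s ∈ H) ↔ ((QuotientAddGroup.mk e : Q) = s) := by
      rw [← QuotientAddGroup.eq_iff_sub_mem, hout_eq]
    simp [h2]
  have hPcent : ∀ (s : Q) (r : A), r ∈ Subring.center A → ∀ x : A,
      P s (r * x) = r * P s x := by
    intro s r hr x
    rw [hPapply, hPapply, Finset.mul_sum]
    refine Finset.sum_congr rfl (fun f _ => ?_)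
    rw [mul_smul_comm]
    congr 1
    have hcomm : Z (out f) * r = r * Z (out f) := Subring.mem_center_iff.mp hr (Z (out f))
    simp only [← mul_assoc]
    rw [hcomm]
  -- the family v and basis b over the center
  set v : Q → A := fun g => Z (out g) with hv
  -- spanning
  have hZspan : ∀ e : E, Z e ∈ Submodule.span R (Set.range v) := by
    intro e
    set u := out (QuotientAddGroup.mk e : Q) with hu
    have he0 : e - u ∈ H := by
      rw [← QuotientAddGroup.eq_iff_sub_mem, hu, hout_eq]
    set r : A := ζ ^ (-(ω (e - u) u)) • Z (e - u) with hr2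
    have hrc : r ∈ Subring.center A := hcsmul _ _ (hcent _ he0)
    have hkey : (⟨r, hrc⟩ : R) • v (QuotientAddGroup.mk e : Q) = Z e := by
      rw [hsmul_def]
      show r * Z u = Z e
      rw [hr2, smul_mul_assoc, hmul, smul_smul, ← hzadd, neg_add_cancel, zpow_zero, one_smul,
        sub_add_cancel]
    rw [← hkey]
    exact Submodule.smul_mem _ _ (Submodule.subset_span ⟨_, rfl⟩)
  have hspan : ⊤ ≤ Submodule.span R (Set.range v) := by
    intro x _
    have hx : x ∈ (⊤ : Submodule ℂ A) := trivial
    rw [← Z.span_eq] at hx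
    refine Submodule.span_induction (p := fun y _ => y ∈ Submodule.span R (Set.range v))
      ?_ ?_ ?_ ?_ hx
    · rintro y ⟨e, rfl⟩; exact hZspan e
    · exact Submodule.zero_mem _
    · intro y z _ _ hy hz; exact Submodule.add_mem _ hy hz
    · intro c y _ hy
      have h1 : c • y = (⟨c • 1, hcsmul c 1 (Subring.one_mem _)⟩ : R) • y := by
        rw [hsmul_def]
        show c • y = (c • (1:A)) * y
        rw [smul_mul_assoc, one_mul]
      rw [h1]
      exact Submodule.smul_mem _ _ hy
  -- linear independence
  have hLI : LinearIndependent R v := by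
    rw [Fintype.linearIndependent_iff]
    intro c hc s
    have h0 : P s (∑ g : Q, c g • v g) = 0 := by rw [hc, map_zero]
    rw [map_sum] at h0
    have h1 : ∀ g : Q, P s (c g • v g)
        = (if g = s then (Fintype.card Q : ℂ) else 0) • ((c g : A) * v g) := by
      intro g
      rw [hsmul_def, hPcent s _ (c g).2, hv]
      show (c g : A) * P s (Z (out g)) = _
      rw [hPZ, hout_eq, mul_smul_comm]
    rw [Finset.sum_congr rfl (fun g _ => h1 g)] at h0
    have h2 : ∀ g : Q, (if g = s then (Fintype.card Q : ℂ) else 0) • ((c g : A) * v g)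
        = if g = s then (Fintype.card Q : ℂ) • ((c g : A) * v g) else 0 := by
      intro g; split <;> simp
    rw [Finset.sum_congr rfl (fun g _ => h2 g), Finset.sum_ite_eq' Finset.univ s _,
      if_pos (Finset.mem_univ s)] at h0
    have h3 : (c s : A) * v s = 0 := by
      have := smul_eq_zero.mp h0
      rcases this with h | h
      · exact absurd h hcard
      · exact h
    have h4 : (c s : A) = 0 := by
      have h5 : (c s : A) * v s * Z (-out s) = 0 := by rw [h3, zero_mul]
      rwa [hv, mul_assoc, hZinv, mul_one] at h5
    exact Subtype.ext h4
  set b : Module.Basis Q R A := Module.Basis.mk hLI hspan with hb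
  have hbapp : ∀ g : Q, b g = Z (out g) := fun g => by rw [hb, Module.Basis.mk_apply]
  haveI hfin : Module.Finite R A := Module.Finite.of_basis b
  haveI hfree : Module.Free R A := Module.Free.of_basis b
  -- surjectivity
  have hsurj : Function.Surjective (azumayaMap R A) := by
    intro φ
    refine ⟨∑ s : Q, ∑ f : Q, ((((Fintype.card Q : ℂ))⁻¹ * ζ ^ (-(2 * ω (out f) (out s))))
      • (φ (Z (out s)) * Z (-out s) * Z (out f))) ⊗ₜ[R] (MulOpposite.op (Z (-out f))), ?_⟩
    refine Module.Basis.ext b (fun t => ?_)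
    rw [hbapp]
    simp only [map_sum, LinearMap.sum_apply]
    have hterm : ∀ s f : Q,
        (azumayaMap R A (((((Fintype.card Q : ℂ))⁻¹ * ζ ^ (-(2 * ω (out f) (out s))))
          • (φ (Z (out s)) * Z (-out s) * Z (out f))) ⊗ₜ[R] (MulOpposite.op (Z (-out f)))))
          (Z (out t))
        = ((Fintype.card Q : ℂ)⁻¹ * ζ ^ (2 * ω (out f) (out t - out s)))
            • (φ (Z (out s)) * Z (-out s) * Z (out t)) := by
      intro s f
      rw [azumayaMap_tmul, smul_mul_assoc, smul_mul_assoc,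
        mul_assoc (φ (Z (out s)) * Z (-out s)) (Z (out f)) (Z (out t)),
        mul_assoc (φ (Z (out s)) * Z (-out s)),
        hconj, mul_smul_comm, smul_smul, mul_assoc, ← hzadd]
      congr 2
      rw [map_sub]; ring
    rw [Finset.sum_congr rfl (fun s _ => Finset.sum_congr rfl (fun f _ => hterm s f))]
    have hinner : ∀ s : Q,
        (∑ f : Q, ((Fintype.card Q : ℂ)⁻¹ * ζ ^ (2 * ω (out f) (out t - out s)))
          • (φ (Z (out s)) * Z (-out s) * Z (out t)))
        = (if t = s then (1:ℂ) else 0) • (φ (Z (out s)) * Z (-out s) * Z (out t)) := by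
      intro s
      rw [← Finset.sum_smul, ← Finset.mul_sum, hsum]
      congr 1
      have h2 : (out t - out s ∈ H) ↔ (t = s) := by
        rw [← QuotientAddGroup.eq_iff_sub_mem, hout_eq, hout_eq]
      by_cases h : t = s
      · rw [if_pos (h2.mpr h), if_pos h, inv_mul_cancel₀ hcard]
      · rw [if_neg (fun hh => h (h2.mp hh)), if_neg h, mul_zero]
    rw [Finset.sum_congr rfl (fun s _ => hinner s)]
    have h3 : ∀ s : Q, (if t = s then (1:ℂ) else 0) • (φ (Z (out s)) * Z (-out s) * Z (out t))
        = if t = s then (φ (Z (out s)) * Z (-out s) * Z (out t)) else 0 := by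
      intro s; split <;> simp
    rw [Finset.sum_congr rfl (fun s _ => h3 s), Finset.sum_ite_eq Finset.univ t _,
      if_pos (Finset.mem_univ t), mul_assoc, hZinv', mul_one]
  -- injectivity
  have hinj : Function.Injective (azumayaMap R A) := by
    set bop : Module.Basis Q R Aᵐᵒᵖ := b.map (MulOpposite.opLinearEquiv R) with hbop
    set bT : Module.Basis (Q × Q) R (A ⊗[R] Aᵐᵒᵖ) := Module.Basis.tensorProduct b bop with hbT
    set bE : Module.Basis (Q × Q) R (Module.End R A) :=
      (Matrix.stdBasis R Q Q).map (LinearMap.toMatrix b b).symm with hbE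
    set ψ : Module.End R A ≃ₗ[R] A ⊗[R] Aᵐᵒᵖ := bE.equiv bT (Equiv.refl _) with hψ
    haveI : Module.Finite R (A ⊗[R] Aᵐᵒᵖ) := Module.Finite.of_basis bT
    have hs2 : Function.Surjective (ψ.toLinearMap ∘ₗ azumayaMap R A) := by
      intro y
      obtain ⟨x, hx⟩ := hsurj (ψ.symm y)
      exact ⟨x, by simp [LinearMap.comp_apply, hx]⟩
    have hi2 := OrzechProperty.injective_of_surjective_endomorphism
      (ψ.toLinearMap ∘ₗ azumayaMap R A) hs2
    intro x y hxy
    exact hi2 (by simp [LinearMap.comp_apply, hxy])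
  refine ⟨?_, hfin, Module.Projective.of_basis b, hinj, hsurj⟩
  · refine ⟨fun {r₁ r₂} h => ?_⟩
    have h1 := h 1
    rw [hsmul_def, hsmul_def, mul_one, mul_one] at h1
    exact Subtype.ext h1
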